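/- Let S = X₁ + ... + X_N be a compound Poisson random variable where N ~ Poisson(λ) and X_k are i.i.d. positive-integer-valued with p(i) = P(X₁ = i), independent of N. Then the probability mass function f(k) = P(S = k) satisfies Panjer's recursion: f(0) = e^{−λ} and f(k) = (λ/k) Σ_{i=1}^k i·p(i)·f(k−i) for k ≥ 1. -/

import Mathlib

/-- Panjer's recursion for a compound Poisson distribution: let `N ~ Poisson(λ)`, let
the claim sizes be i.i.d. positive-integer valued with p.m.f. `p`, and let
`q n` denote the `n`-fold convolution of `p` (the p.m.f. of `X₁ + ⋯ + X_n`), so that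
the compound p.m.f. is `f k = ∑_{n≥0} (λ^n e^{-λ}/n!) q n k`. Then `f 0 = e^{-λ}` and
`f k = (λ/k) ∑_{i=1}^k i · p i · f (k-i)` for all `k ≥ 1`. -/
theorem stmt_17 (lam : ℝ) (hlam : 0 < lam)
    (p : ℕ → ℝ) (hp0 : p 0 = 0) (hpnn : ∀ i, 0 ≤ p i) (hpsum : HasSum p 1)
    (q : ℕ → ℕ → ℝ)
    (hq0 : ∀ k, q 0 k = if k = 0 then 1 else 0)
    (hqrec : ∀ n k, q (n + 1) k = ∑ i ∈ Finset.range (k + 1), q n i * p (k - i))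
    (f : ℕ → ℝ)
    (hf : ∀ k, HasSum (fun n : ℕ =>
      lam ^ n * Real.exp (-lam) / (Nat.factorial n : ℝ) * q n k) (f k)) :
    f 0 = Real.exp (-lam) ∧
      ∀ k : ℕ, 1 ≤ k →
        f k = (lam / k) * ∑ i ∈ Finset.Icc 1 k, (i : ℝ) * p i * f (k - i) := by
  -- q n 0 = 0 for n ≥ 1
  have hq00 : ∀ n, q n 0 = if n = 0 then 1 else 0 := by
    intro n
    cases n with
    | zero => simp [hq0]
    | succ m =>
      have := hqrec m 0
      simp [hq0, hp0] at this
      simp [this]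
  -- f 0 = exp(-lam)
  have hf0 : f 0 = Real.exp (-lam) := by
    have h1 : HasSum (fun n : ℕ => if n = 0 then Real.exp (-lam) else 0)
        (Real.exp (-lam)) := hasSum_ite_eq 0 _
    refine (hf 0).unique ?_
    convert h1 using 1
    funext n
    rcases eq_or_ne n 0 with rfl | hn
    · simp [hq00]
    · simp [hq00, hn]
  refine ⟨hf0, ?_⟩
  -- q 1 k = p k
  have hq1 : ∀ k, q 1 k = p k := by
    intro k
    rw [hqrec]
    rw [Finset.sum_eq_single_of_mem 0 (by simp)]
    · simp [hq0]
    · intro i _ hi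
      simp [hq0, hi]
  -- key identity: k * q (n+1) k = (n+1) * ∑_{i=1}^k i p i q n (k-i)
  have key : ∀ (n : ℕ) (k : ℕ), (k : ℝ) * q (n + 1) k
      = (n + 1 : ℝ) * ∑ i ∈ Finset.Icc 1 k, (i : ℝ) * p i * q n (k - i) := by
    intro n
    induction n with
    | zero =>
      intro k
      rcases Nat.eq_zero_or_pos k with rfl | hk
      · simp
      · rw [hq1]
        rw [Finset.sum_eq_single_of_mem k (Finset.mem_Icc.mpr ⟨hk, le_rfl⟩)]
        · simp [hq0]
        · intro i hi hik
          rw [Finset.mem_Icc] at hi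
          have : k - i ≠ 0 := by omega
          simp [hq0, this]
    | succ n ih =>
      intro k
      rw [hqrec (n + 1) k, Finset.mul_sum]
      -- split k = j + (k - j)
      have split : ∀ j ∈ Finset.range (k + 1),
          (k : ℝ) * (q (n + 1) j * p (k - j))
            = (j : ℝ) * q (n + 1) j * p (k - j)
              + ((k - j : ℕ) : ℝ) * q (n + 1) j * p (k - j) := by
        intro j hj
        rw [Finset.mem_range, Nat.lt_succ_iff] at hj
        rw [Nat.cast_sub hj]
        ring
      rw [Finset.sum_congr rfl split, Finset.sum_add_distrib]
      -- second sum: reindex j ↦ k - j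
      have hsecond : ∑ j ∈ Finset.range (k + 1),
          ((k - j : ℕ) : ℝ) * q (n + 1) j * p (k - j)
          = ∑ i ∈ Finset.Icc 1 k, (i : ℝ) * p i * q (n + 1) (k - i) := by
        rw [← Finset.sum_range_reflect]
        have : ∀ j ∈ Finset.range (k + 1),
            ((k - (k + 1 - 1 - j) : ℕ) : ℝ) * q (n + 1) (k + 1 - 1 - j)
              * p (k - (k + 1 - 1 - j))
            = (j : ℝ) * q (n + 1) (k - j) * p j := by
          intro j hj
          rw [Finset.mem_range, Nat.lt_succ_iff] at hj
          have h1 : k + 1 - 1 - j = k - j := by omega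
          have h2 : k - (k - j) = j := by omega
          rw [h1, h2]
        rw [Finset.sum_congr rfl this]
        rw [← Finset.sum_subset ((fun x hx => by rw [Finset.mem_Icc] at hx; rw [Finset.mem_range]; omega : Finset.Icc 1 k ⊆ Finset.range (k + 1)))]
        · exact Finset.sum_congr rfl (fun i _ => by ring)
        · intro x hx hx'
          rw [Finset.mem_range, Nat.lt_succ_iff] at hx
          rw [Finset.mem_Icc] at hx'
          have : x = 0 := by omega
          simp [this, hp0]
      rw [hsecond]
      -- first sum
      have hfirst : ∑ j ∈ Finset.range (k + 1),
          (j : ℝ) * q (n + 1) j * p (k - j)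
          = (n + 1 : ℝ) * ∑ i ∈ Finset.Icc 1 k, (i : ℝ) * p i * q (n + 1) (k - i) := by
        have step1 : ∀ j ∈ Finset.range (k + 1),
            (j : ℝ) * q (n + 1) j * p (k - j)
            = (n + 1 : ℝ) * ∑ i ∈ Finset.Icc 1 k,
                (if i ≤ j then (i : ℝ) * p i * q n (j - i) * p (k - j) else 0) := by
          intro j hj
          rw [Finset.mem_range, Nat.lt_succ_iff] at hj
          have := ih j
          rw [mul_comm ((j : ℝ)) (q (n+1) j)] at this
          -- (j) * q (n+1) j = ...
          have hij : (j : ℝ) * q (n + 1) j * p (k - j)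
              = ((n : ℝ) + 1) * (∑ i ∈ Finset.Icc 1 j, (i : ℝ) * p i * q n (j - i)) * p (k - j) := by
            rw [← ih j]
          rw [hij]
          rw [← Finset.sum_subset (Finset.Icc_subset_Icc_right hj)
              (fun x hx hx' => by
                rw [Finset.mem_Icc] at hx hx'
                rw [if_neg (by omega : ¬ x ≤ j)])]
          rw [Finset.sum_ite_of_true (fun i hi => (Finset.mem_Icc.mp hi).2)]
          rw [mul_assoc, Finset.sum_mul]
        rw [Finset.sum_congr rfl step1, ← Finset.mul_sum, Finset.sum_comm]
        congr 1
        refine Finset.sum_congr rfl (fun i hi => ?_)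
        rw [Finset.mem_Icc] at hi
        rw [← Finset.sum_filter]
        have hfil : (Finset.range (k + 1)).filter (fun x => i ≤ x) = Finset.Icc i k := by
          ext x
          simp only [Finset.mem_filter, Finset.mem_range, Finset.mem_Icc, Nat.lt_succ_iff]
          omega
        rw [hfil, ← Finset.Ico_add_one_right_eq_Icc, Finset.sum_Ico_eq_sum_range]
        have hki : k + 1 - i = (k - i) + 1 := by omega
        rw [hki, hqrec n (k - i), Finset.mul_sum]
        refine Finset.sum_congr rfl (fun m hm => ?_)
        have h1 : i + m - i = m := by omega
        have h2 : k - (i + m) = (k - i) - m := by omega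
        rw [h1, h2]
        ring
      rw [hfirst]
      push_cast
      ring
  intro k hk
  have hk0 : (k : ℝ) ≠ 0 := Nat.cast_ne_zero.mpr (by omega)
  set a : ℕ → ℝ := fun n => lam ^ n * Real.exp (-lam) / (Nat.factorial n : ℝ) with ha
  set F : ℕ → ℝ := fun n => (k : ℝ) * (a n * q n k) with hFdef
  set T : ℝ := ∑ i ∈ Finset.Icc 1 k, (i : ℝ) * p i * f (k - i) with hT
  have H2 : HasSum (fun n : ℕ => ∑ i ∈ Finset.Icc 1 k, (i : ℝ) * p i * (a n * q n (k - i)))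
      T := hasSum_sum (fun i _ => ((hf (k - i)).mul_left _))
  have hstep : ∀ n : ℕ, a (n + 1) * ((n : ℝ) + 1) = lam * a n := by
    intro n
    have hfac : ((Nat.factorial (n + 1) : ℕ) : ℝ)
        = ((n : ℝ) + 1) * (Nat.factorial n : ℝ) := by
      rw [Nat.factorial_succ]; push_cast; ring
    have hfne : (Nat.factorial n : ℝ) ≠ 0 := Nat.cast_ne_zero.mpr (Nat.factorial_ne_zero n)
    have hne1 : ((n : ℝ) + 1) ≠ 0 := by positivity
    simp only [ha]
    rw [hfac]
    field_simp
    ring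
  have e1 : ∀ n : ℕ, F (n + 1)
      = lam * ∑ i ∈ Finset.Icc 1 k, (i : ℝ) * p i * (a n * q n (k - i)) := by
    intro n
    have h1 : F (n + 1) = a (n + 1) * ((k : ℝ) * q (n + 1) k) := by
      simp only [hFdef]; ring
    rw [h1, key n k, ← mul_assoc, hstep n, Finset.mul_sum, Finset.mul_sum]
    exact Finset.sum_congr rfl (fun i _ => by ring)
  have H3 : HasSum (fun n : ℕ => F (n + 1)) (lam * T) := by
    have := H2.mul_left lam
    rw [show (fun n : ℕ => F (n + 1)) = _ from funext e1]
    exact this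
  have H4 : HasSum F (lam * T + ∑ i ∈ Finset.range 1, F i) :=
    (hasSum_nat_add_iff 1).mp H3
  have hF0 : ∑ i ∈ Finset.range 1, F i = 0 := by
    have hq0k : q 0 k = 0 := by rw [hq0, if_neg (by omega : ¬ k = 0)]
    simp [hFdef, hq0k]
  rw [hF0, add_zero] at H4
  have H1 : HasSum F ((k : ℝ) * f k) := (hf k).mul_left (k : ℝ)
  have hkey : (k : ℝ) * f k = lam * T := H1.unique H4
  field_simp
  linarith [hkey]
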